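/- arXiv:1402.6923 — 4 statements merged into one kernel-verified Lean document; each statement's English description precedes it below -/
import Mathlib

section
/- Fix m ≥ 1 and let G_n = (S_n)^{m-1} with length l(σ) = l(σ_1) + ... + l(σ_{m-1}). Call σ ∈ G_n connected if there is no k with 1 ≤ k < n such that each component σ_i fixes the set {1,...,k} setwise. If a_n = Σ_{σ ∈ P_n} q^{l(σ)} where P_n ⊂ G_n is the set of connected elements, then in the formal power series ring ℚ[q][[t]] one has (Σ_{n≥0} ([n]_q^!)^{m-1} t^n)^{-1} = 1 - Σ_{n≥1} a_n t^n. -/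
open PowerSeries Finset Classical

/-- The number of inversions of a permutation of `Fin n`. -/
def invCount {n : ℕ} (σ : Equiv.Perm (Fin n)) : ℕ :=
  (Finset.univ.filter (fun p : Fin n × Fin n => p.1 < p.2 ∧ σ p.2 < σ p.1)).card

/-- The `q`-factorial `[n]_q^! = ∏_{i=1}^n (1 + q + ⋯ + q^{i-1})` as an integer polynomial. -/
noncomputable def qFact (n : ℕ) : Polynomial ℤ :=
  ∏ i ∈ Finset.range n, ∑ j ∈ Finset.range (i + 1), Polynomial.X ^ j

/-- A tuple `σ : Fin r → S_n` is connected if no proper initial interval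
`{0, …, k-1}` (with `1 ≤ k < n`) is invariant under all components of `σ`. -/
def PermTupleConnected {r n : ℕ} (σ : Fin r → Equiv.Perm (Fin n)) : Prop :=
  ¬ ∃ k : ℕ, 1 ≤ k ∧ k < n ∧ ∀ i : Fin r, ∀ x : Fin n, (x : ℕ) < k → ((σ i x : Fin n) : ℕ) < k



section Aux
open Equiv
noncomputable section

lemma invCount_eq_sum {n : ℕ} (σ : Equiv.Perm (Fin n)) :
    invCount σ = ∑ p : Fin n × Fin n, if p.1 < p.2 ∧ σ p.2 < σ p.1 then 1 else 0 := by
  classical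
  rw [invCount, Finset.card_filter]

noncomputable def gluePerm (k l : ℕ) (τ : Perm (Fin k)) (ρ : Perm (Fin l)) :
    Perm (Fin (k + l)) :=
  finSumFinEquiv.permCongr (Equiv.sumCongr τ ρ)

lemma gluePerm_castAdd (k l : ℕ) (τ : Perm (Fin k)) (ρ : Perm (Fin l)) (x : Fin k) :
    gluePerm k l τ ρ (Fin.castAdd l x) = Fin.castAdd l (τ x) := by
  simp [gluePerm, Equiv.permCongr_apply]

lemma gluePerm_natAdd (k l : ℕ) (τ : Perm (Fin k)) (ρ : Perm (Fin l)) (y : Fin l) :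
    gluePerm k l τ ρ (Fin.natAdd k y) = Fin.natAdd k (ρ y) := by
  simp [gluePerm, Equiv.permCongr_apply]

lemma invCount_gluePerm (k l : ℕ) (τ : Perm (Fin k)) (ρ : Perm (Fin l)) :
    invCount (gluePerm k l τ ρ) = invCount τ + invCount ρ := by
  classical
  rw [invCount_eq_sum]
  rw [← Fintype.sum_equiv ((finSumFinEquiv.prodCongr finSumFinEquiv))
      (fun p : (Fin k ⊕ Fin l) × (Fin k ⊕ Fin l) =>
        if (finSumFinEquiv p.1 : Fin (k+l)) < finSumFinEquiv p.2 ∧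
            gluePerm k l τ ρ (finSumFinEquiv p.2) < gluePerm k l τ ρ (finSumFinEquiv p.1)
          then (1:ℕ) else 0) _ (fun p => rfl)]
  rw [Fintype.sum_prod_type]
  simp only [Fintype.sum_sum_type]
  simp only [finSumFinEquiv_apply_left, finSumFinEquiv_apply_right,
    gluePerm_castAdd, gluePerm_natAdd]
  have hcc : ∀ (a b : Fin k), (Fin.castAdd l a < Fin.castAdd l b) ↔ a < b := by
    intro a b; simp only [Fin.lt_def, Fin.coe_castAdd]
  have hcn : ∀ (a : Fin k) (b : Fin l), (Fin.castAdd l a < Fin.natAdd k b) := by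
    intro a b; simp only [Fin.lt_def, Fin.coe_castAdd, Fin.coe_natAdd]; omega
  have hnc : ∀ (a : Fin l) (b : Fin k), ¬ (Fin.natAdd k a < Fin.castAdd l b) := by
    intro a b; simp only [Fin.lt_def, Fin.coe_castAdd, Fin.coe_natAdd]; omega
  have hnn : ∀ (a b : Fin l), (Fin.natAdd k a < Fin.natAdd k b) ↔ a < b := by
    intro a b; simp only [Fin.lt_def, Fin.coe_natAdd]; omega
  simp only [hcc, hnn]
  have t12 : ∀ a : Fin k, ∑ v : Fin l, (if Fin.castAdd l a < Fin.natAdd k v ∧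
      Fin.natAdd k (ρ v) < Fin.castAdd l (τ a) then (1:ℕ) else 0) = 0 := by
    intro a
    refine Finset.sum_eq_zero fun v _ => ?_
    simp [hnc]
  have t21 : ∀ a : Fin l, ∑ v : Fin k, (if Fin.natAdd k a < Fin.castAdd l v ∧
      Fin.castAdd l (τ v) < Fin.natAdd k (ρ a) then (1:ℕ) else 0) = 0 := by
    intro a
    refine Finset.sum_eq_zero fun v _ => ?_
    simp [hnc a v]
  simp only [t12, t21, add_zero, zero_add]
  rw [invCount_eq_sum τ, invCount_eq_sum ρ, Fintype.sum_prod_type, Fintype.sum_prod_type]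

/-- insertion map: `E a σ` sends `last` to `a` and `castSucc j` to `a.succAbove (σ j)`. -/
def insPerm {n : ℕ} (a : Fin (n+1)) (σ : Perm (Fin n)) : Perm (Fin (n+1)) :=
  finSuccEquivLast.trans ((Equiv.optionCongr σ).trans (finSuccEquiv' a).symm)

lemma insPerm_last {n : ℕ} (a : Fin (n+1)) (σ : Perm (Fin n)) :
    insPerm a σ (Fin.last n) = a := by
  simp [insPerm]

lemma insPerm_castSucc {n : ℕ} (a : Fin (n+1)) (σ : Perm (Fin n)) (j : Fin n) :
    insPerm a σ (Fin.castSucc j) = a.succAbove (σ j) := by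
  simp [insPerm]

lemma lt_succAbove_iff' {n : ℕ} (a : Fin (n+1)) (x : Fin n) :
    a < a.succAbove x ↔ (a : ℕ) ≤ (x : ℕ) := by
  rcases lt_or_ge (Fin.castSucc x) a with h | h
  · rw [Fin.succAbove_of_castSucc_lt a x h]
    simp only [Fin.lt_def, Fin.coe_castSucc] at *
    omega
  · rw [Fin.succAbove_of_le_castSucc a x h]
    simp only [Fin.le_def, Fin.lt_def, Fin.coe_castSucc, Fin.val_succ] at *
    omega

lemma invCount_insPerm {n : ℕ} (a : Fin (n+1)) (σ : Perm (Fin n)) :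
    invCount (insPerm a σ) = invCount σ + (n - (a : ℕ)) := by
  classical
  rw [invCount_eq_sum]
  rw [← Fintype.sum_equiv ((finSumFinEquiv (m := n) (n := 1)).prodCongr finSumFinEquiv)
      (fun p : (Fin n ⊕ Fin 1) × (Fin n ⊕ Fin 1) =>
        if (finSumFinEquiv p.1 : Fin (n+1)) < finSumFinEquiv p.2 ∧
            insPerm a σ (finSumFinEquiv p.2) < insPerm a σ (finSumFinEquiv p.1)
          then (1:ℕ) else 0) _ (fun p => rfl)]
  rw [Fintype.sum_prod_type]
  simp only [Fintype.sum_sum_type]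
  have ecast : ∀ x : Fin n, finSumFinEquiv (Sum.inl x) = Fin.castSucc x := by
    intro x
    rw [finSumFinEquiv_apply_left]
    ext; simp
  have elast : ∀ y : Fin 1, (finSumFinEquiv (Sum.inr y) : Fin (n+1)) = Fin.last n := by
    intro y
    rw [finSumFinEquiv_apply_right]
    ext; simp [Fin.fin_one_eq_zero y]
  simp only [ecast, elast, insPerm_last, insPerm_castSucc]
  have hcc : ∀ (x y : Fin n), (Fin.castSucc x < Fin.castSucc y) ↔ x < y :=
    fun x y => Fin.castSucc_lt_castSucc_iff
  have hsa : ∀ (x y : Fin n), (a.succAbove x < a.succAbove y) ↔ x < y :=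
    fun x y => (Fin.strictMono_succAbove a).lt_iff_lt
  have hcl : ∀ x : Fin n, Fin.castSucc x < Fin.last n := Fin.castSucc_lt_last
  have hll : ¬ (Fin.last n < Fin.last n) := lt_irrefl _
  have hlc : ∀ x : Fin n, ¬ (Fin.last n < Fin.castSucc x) := by
    intro x
    simp only [Fin.lt_def, Fin.coe_castSucc, Fin.val_last]
    omega
  simp only [hcc, hsa, hcl, true_and, hll, false_and, if_false]
  have t21 : ∀ y : Fin 1, (∑ x : Fin n, if Fin.last n < Fin.castSucc x ∧
      a.succAbove (σ x) < a then (1:ℕ) else 0) = 0 := by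
    intro y
    exact Finset.sum_eq_zero fun x _ => by simp [hlc x]
  rw [Fin.sum_univ_one, Fin.sum_univ_one]
  rw [t21 0]
  simp only [lt_succAbove_iff', Fin.sum_univ_one, add_zero]
  have main2 : (∑ x : Fin n, if (a:ℕ) ≤ ((σ x : Fin n) : ℕ) then (1:ℕ) else 0)
      = n - (a : ℕ) := by
    rw [Fintype.sum_equiv σ _ (fun x => if (a:ℕ) ≤ (x : ℕ) then (1:ℕ) else 0) (fun x => rfl)]
    rw [Fin.sum_univ_eq_sum_range (fun v => if (a:ℕ) ≤ v then (1:ℕ) else 0) n]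
    rw [← Finset.card_filter]
    have : Finset.filter (fun v => (a:ℕ) ≤ v) (Finset.range n) = Finset.Ico (a:ℕ) n := by
      ext v; simp [Finset.mem_Ico, Finset.mem_range]; omega
    rw [this, Nat.card_Ico]
  rw [Finset.sum_add_distrib, main2, invCount_eq_sum σ, Fintype.sum_prod_type]

lemma sum_perm_pow_eq_qFact (n : ℕ) :
    ∑ σ : Perm (Fin n), (Polynomial.X : Polynomial ℤ) ^ invCount σ = qFact n := by
  classical
  induction n with
  | zero =>
    rw [qFact]
    simp [invCount]
  | succ n ih =>
    have hbij : Function.Bijective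
        (fun p : Fin (n+1) × Perm (Fin n) => insPerm p.1 p.2) := by
      rw [Fintype.bijective_iff_injective_and_card]
      constructor
      · rintro ⟨a, σ⟩ ⟨b, ρ⟩ h
        simp only at h
        have ha : a = b := by
          have := congrArg (fun π : Perm (Fin (n+1)) => π (Fin.last n)) h
          simpa [insPerm_last] using this
        subst ha
        have hσ : σ = ρ := by
          ext j
          have := congrArg (fun π : Perm (Fin (n+1)) => π (Fin.castSucc j)) h
          simp only [insPerm_castSucc] at this
          have := Fin.succAbove_right_injective (p := a) this
          exact congrArg Fin.val this
        simp [hσ]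
      · simp [Fintype.card_perm, Nat.factorial_succ, mul_comm]
    rw [← Fintype.sum_bijective _ hbij
      (fun p : Fin (n+1) × Perm (Fin n) =>
        (Polynomial.X : Polynomial ℤ) ^ (invCount p.2 + (n - (p.1 : ℕ)))) _
      (fun p => by rw [invCount_insPerm])]
    rw [Fintype.sum_prod_type]
    have : ∀ a : Fin (n+1), (∑ σ : Perm (Fin n),
        (Polynomial.X : Polynomial ℤ) ^ (invCount σ + (n - (a:ℕ))))
        = Polynomial.X ^ (n - (a:ℕ)) * qFact n := by
      intro a
      simp only [pow_add]
      rw [← Finset.sum_mul, ih, mul_comm]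
    simp only [this]
    rw [← Finset.sum_mul]
    rw [Fin.sum_univ_eq_sum_range (fun v => (Polynomial.X : Polynomial ℤ) ^ (n - v)) (n+1)]
    have hr : ∑ v ∈ Finset.range (n+1), (Polynomial.X : Polynomial ℤ) ^ (n - v)
        = ∑ v ∈ Finset.range (n+1), (Polynomial.X : Polynomial ℤ) ^ v := by
      rw [← Finset.sum_range_reflect]
      refine Finset.sum_congr rfl fun v hv => ?_
      simp only [Finset.mem_range] at hv
      congr 1
      omega
    rw [hr]
    conv_rhs => rw [qFact, Finset.prod_range_succ]
    rw [mul_comm, qFact]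

-- tuple power lemma
lemma sum_tuple_pow_eq_qFact_pow (r n : ℕ) :
    ∑ σ : Fin r → Perm (Fin n),
      (Polynomial.X : Polynomial ℤ) ^ (∑ i : Fin r, invCount (σ i)) = (qFact n) ^ r := by
  classical
  rw [← sum_perm_pow_eq_qFact]
  rw [← Fin.prod_const r (∑ σ : Perm (Fin n), (Polynomial.X : Polynomial ℤ) ^ invCount σ)]
  rw [Finset.prod_univ_sum (fun _ : Fin r => (Finset.univ : Finset (Perm (Fin n))))
    (fun _ σ => (Polynomial.X : Polynomial ℤ) ^ invCount σ)]
  rw [Fintype.piFinset_univ]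
  exact Finset.sum_congr rfl fun σ _ => by rw [Finset.prod_pow_eq_pow_sum]

-- injectivity of glue
lemma gluePerm_injective (k l : ℕ) :
    ∀ (τ τ' : Perm (Fin k)) (ρ ρ' : Perm (Fin l)),
      gluePerm k l τ ρ = gluePerm k l τ' ρ' → τ = τ' ∧ ρ = ρ' := by
  intro τ τ' ρ ρ' h
  constructor
  · ext x
    have := congrArg (fun π : Perm (Fin (k+l)) => π (Fin.castAdd l x)) h
    simp only [gluePerm_castAdd] at this
    exact congrArg Fin.val (Fin.castAdd_injective _ _ this) -- maybe wrong name
  · ext y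
    have := congrArg (fun π : Perm (Fin (k+l)) => π (Fin.natAdd k y)) h
    simp only [gluePerm_natAdd] at this
    have h2 : (Fin.natAdd k (ρ y) : ℕ) = (Fin.natAdd k (ρ' y) : ℕ) := congrArg Fin.val this
    simp only [Fin.coe_natAdd] at h2
    omega

-- surjectivity onto invariant perms
lemma exists_gluePerm (k l : ℕ) (π : Perm (Fin (k + l)))
    (h : ∀ x : Fin (k + l), (x : ℕ) < k → ((π x : Fin (k+l)) : ℕ) < k) :
    ∃ (τ : Perm (Fin k)) (ρ : Perm (Fin l)), gluePerm k l τ ρ = π := by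
  classical
  have hc : ∀ x : Fin k, ((π (Fin.castAdd l x) : Fin (k+l)) : ℕ) < k := by
    intro x
    exact h _ (by simp [x.isLt])
  set fτ : Fin k → Fin k := fun x => ⟨(π (Fin.castAdd l x) : Fin (k+l)), hc x⟩ with hfτ
  have hinjτ : Function.Injective fτ := by
    intro x y hxy
    simp only [hfτ, Fin.mk.injEq] at hxy
    have := congrArg Fin.val (π.injective (Fin.ext hxy))
    simp only [Fin.coe_castAdd] at this
    exact Fin.ext this
  have hbijτ : Function.Bijective fτ := Finite.injective_iff_bijective.mp hinjτ
  have hsurjτ := hbijτ.surjective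
  have hge : ∀ y : Fin l, k ≤ ((π (Fin.natAdd k y) : Fin (k+l)) : ℕ) := by
    intro y
    by_contra hlt
    push_neg at hlt
    obtain ⟨x, hx⟩ := hsurjτ ⟨(π (Fin.natAdd k y) : Fin (k+l)), hlt⟩
    simp only [hfτ, Fin.mk.injEq] at hx
    have := congrArg Fin.val (π.injective (Fin.ext hx))
    simp only [Fin.coe_castAdd, Fin.coe_natAdd] at this
    omega
  set fρ : Fin l → Fin l := fun y =>
    ⟨((π (Fin.natAdd k y) : Fin (k+l)) : ℕ) - k, by
      have := (π (Fin.natAdd k y)).isLt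
      have := hge y
      omega⟩ with hfρ
  have hinjρ : Function.Injective fρ := by
    intro x y hxy
    have hval := congrArg Fin.val hxy
    simp only [hfρ] at hval
    have hx := hge x
    have hy := hge y
    have : ((π (Fin.natAdd k x) : Fin (k+l)) : ℕ) = ((π (Fin.natAdd k y) : Fin (k+l)) : ℕ) := by
      omega
    have := π.injective (Fin.ext this)
    have := congrArg Fin.val this
    simp only [Fin.coe_natAdd] at this
    exact Fin.ext (by omega)
  have hbijρ : Function.Bijective fρ := Finite.injective_iff_bijective.mp hinjρ
  refine ⟨Equiv.ofBijective fτ hbijτ, Equiv.ofBijective fρ hbijρ, ?_⟩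
  ext z
  rcases lt_or_ge (z : ℕ) k with hz | hz
  · have hzc : z = Fin.castAdd l ⟨(z : ℕ), hz⟩ := Fin.ext rfl
    rw [hzc, gluePerm_castAdd]
    have h3 : (Equiv.ofBijective fτ hbijτ) ⟨(z:ℕ), hz⟩ = fτ ⟨(z:ℕ), hz⟩ := rfl
    rw [h3, hfτ]
    exact rfl
  · have hzn : z = Fin.natAdd k ⟨(z : ℕ) - k, by have := z.isLt; omega⟩ := Fin.ext (by simp; omega)
    rw [hzn, gluePerm_natAdd]
    have h3 : (Equiv.ofBijective fρ hbijρ) ⟨(z:ℕ) - k, by have := z.isLt; omega⟩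
        = fρ ⟨(z:ℕ) - k, by have := z.isLt; omega⟩ := rfl
    rw [h3, hfρ]
    simp only [Fin.coe_natAdd]
    have := hge ⟨(z:ℕ) - k, by have := z.isLt; omega⟩
    omega

lemma gluePerm_val_lt (k l : ℕ) (τ : Perm (Fin k)) (ρ : Perm (Fin l))
    (x : Fin (k+l)) (hx : (x:ℕ) < k) :
    ((gluePerm k l τ ρ x : Fin (k+l)) : ℕ) = ((τ ⟨(x:ℕ), hx⟩ : Fin k) : ℕ) := by
  have hxc : Fin.castAdd l ⟨(x:ℕ), hx⟩ = x := Fin.ext rfl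
  have h1 : (gluePerm k l τ ρ) x = (gluePerm k l τ ρ) (Fin.castAdd l ⟨(x:ℕ), hx⟩) := by
    rw [hxc]
  rw [h1, gluePerm_castAdd]
  rfl

lemma glue_inv_iff (k l : ℕ) (τ : Perm (Fin k)) (ρ : Perm (Fin l)) (j : ℕ) (hj : j ≤ k) :
    (∀ x : Fin (k+l), (x:ℕ) < j → ((gluePerm k l τ ρ x : Fin (k+l)):ℕ) < j) ↔
    (∀ x : Fin k, (x:ℕ) < j → ((τ x : Fin k):ℕ) < j) := by
  constructor
  · intro H x hx
    have := H (Fin.castAdd l x) (by simpa using hx)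
    rw [gluePerm_val_lt k l τ ρ _ (by simpa using lt_of_lt_of_le hx hj)] at this
    simpa using this
  · intro H x hx
    have hxk : (x:ℕ) < k := lt_of_lt_of_le hx hj
    rw [gluePerm_val_lt k l τ ρ x hxk]
    exact H ⟨(x:ℕ), hxk⟩ hx

def toPair (k l : ℕ) (π : Perm (Fin (k+l))) : Perm (Fin k) × Perm (Fin l) :=
  if h : ∃ p : Perm (Fin k) × Perm (Fin l), gluePerm k l p.1 p.2 = π
  then Classical.choose h else (1, 1)

lemma toPair_glue (k l : ℕ) (τ : Perm (Fin k)) (ρ : Perm (Fin l)) :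
    toPair k l (gluePerm k l τ ρ) = (τ, ρ) := by
  have h : ∃ p : Perm (Fin k) × Perm (Fin l), gluePerm k l p.1 p.2 = gluePerm k l τ ρ :=
    ⟨(τ, ρ), rfl⟩
  rw [toPair, dif_pos h]
  have hs := Classical.choose_spec h
  obtain ⟨h1, h2⟩ := gluePerm_injective k l _ τ _ ρ hs
  exact Prod.ext h1 h2

lemma glue_toPair (k l : ℕ) (π : Perm (Fin (k+l)))
    (h : ∀ x : Fin (k + l), (x : ℕ) < k → ((π x : Fin (k+l)) : ℕ) < k) :
    gluePerm k l (toPair k l π).1 (toPair k l π).2 = π := by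
  obtain ⟨τ, ρ, hg⟩ := exists_gluePerm k l π h
  rw [← hg, toPair_glue]

lemma sliceSum (r k l : ℕ) :
    ∑ σ ∈ Finset.univ.filter (fun σ : Fin r → Perm (Fin (k+l)) =>
        (∀ i : Fin r, ∀ x : Fin (k+l), (x:ℕ) < k → ((σ i x : Fin (k+l)):ℕ) < k) ∧
        ¬ ∃ j : ℕ, 1 ≤ j ∧ j < k ∧ ∀ i : Fin r, ∀ x : Fin (k+l),
            (x:ℕ) < j → ((σ i x : Fin (k+l)):ℕ) < j),
      (Polynomial.X : Polynomial ℤ) ^ (∑ i : Fin r, invCount (σ i))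
    = (∑ τ ∈ Finset.univ.filter
          (fun τ : Fin r → Perm (Fin k) => PermTupleConnected τ),
        (Polynomial.X : Polynomial ℤ) ^ (∑ i : Fin r, invCount (τ i))) * (qFact l) ^ r := by
  classical
  rw [← sum_tuple_pow_eq_qFact_pow r l, Finset.sum_mul_sum, ← Finset.sum_product']
  refine Finset.sum_nbij'
    (i := fun σ => (fun i => (toPair k l (σ i)).1, fun i => (toPair k l (σ i)).2))
    (j := fun p => fun i => gluePerm k l (p.1 i) (p.2 i)) ?_ ?_ ?_ ?_ ?_
  · intro σ hσ
    rw [Finset.mem_filter] at hσ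
    obtain ⟨-, hinv, hconn⟩ := hσ
    have hg : ∀ i, gluePerm k l (toPair k l (σ i)).1 (toPair k l (σ i)).2 = σ i :=
      fun i => glue_toPair k l (σ i) (hinv i)
    rw [Finset.mem_product, Finset.mem_filter]
    refine ⟨⟨Finset.mem_univ _, ?_⟩, Finset.mem_univ _⟩
    rintro ⟨j, hj1, hjk, hjinv⟩
    exact hconn ⟨j, hj1, hjk, fun i x hx => by
      rw [← hg i]
      exact ((glue_inv_iff k l _ _ j hjk.le).2 (hjinv i)) x hx⟩
  · intro p hp
    rw [Finset.mem_product, Finset.mem_filter] at hp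
    obtain ⟨⟨-, hconn⟩, -⟩ := hp
    rw [Finset.mem_filter]
    refine ⟨Finset.mem_univ _, fun i x hx => ?_, ?_⟩
    · rw [gluePerm_val_lt k l _ _ x hx]
      exact (p.1 i _).isLt
    · rintro ⟨j, hj1, hjk, hjinv⟩
      exact hconn ⟨j, hj1, hjk, fun i x hx =>
        ((glue_inv_iff k l _ _ j hjk.le).1 (hjinv i)) x hx⟩
  · intro σ hσ
    rw [Finset.mem_filter] at hσ
    funext i
    exact glue_toPair k l (σ i) (hσ.2.1 i)
  · intro p hp
    have : ∀ i, toPair k l (gluePerm k l (p.1 i) (p.2 i)) = (p.1 i, p.2 i) :=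
      fun i => toPair_glue k l (p.1 i) (p.2 i)
    refine Prod.ext ?_ ?_
    · funext i
      exact congrArg Prod.fst (this i)
    · funext i
      exact congrArg Prod.snd (this i)
  · intro σ hσ
    rw [Finset.mem_filter] at hσ
    have hg : ∀ i, gluePerm k l (toPair k l (σ i)).1 (toPair k l (σ i)).2 = σ i :=
      fun i => glue_toPair k l (σ i) (hσ.2.1 i)
    rw [← pow_add]
    congr 1
    rw [← Finset.sum_add_distrib]
    refine Finset.sum_congr rfl fun i _ => ?_
    rw [← invCount_gluePerm k l, hg i]

lemma key (r n : ℕ) (hn : 1 ≤ n) :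
    (qFact n) ^ r = ∑ k ∈ Finset.Icc 1 n,
      (∑ τ ∈ Finset.univ.filter
          (fun τ : Fin r → Perm (Fin k) => PermTupleConnected τ),
        (Polynomial.X : Polynomial ℤ) ^ (∑ i : Fin r, invCount (τ i))) * (qFact (n - k)) ^ r := by
  classical
  have hex : ∀ σ : Fin r → Perm (Fin n), ∃ j : ℕ, 1 ≤ j ∧
      ∀ i : Fin r, ∀ x : Fin n, (x:ℕ) < j → ((σ i x : Fin n):ℕ) < j :=
    fun σ => ⟨n, hn, fun i x _ => (σ i x).isLt⟩
  set g : (Fin r → Perm (Fin n)) → ℕ := fun σ => Nat.find (hex σ) with hgdef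
  have hmaps : ∀ σ ∈ (Finset.univ : Finset (Fin r → Perm (Fin n))), g σ ∈ Finset.Icc 1 n := by
    intro σ _
    rw [Finset.mem_Icc]
    exact ⟨(Nat.find_spec (hex σ)).1, Nat.find_le ⟨hn, fun i x _ => (σ i x).isLt⟩⟩
  rw [← sum_tuple_pow_eq_qFact_pow r n,
    ← Finset.sum_fiberwise_of_maps_to hmaps
      (fun σ => (Polynomial.X : Polynomial ℤ) ^ (∑ i : Fin r, invCount (σ i)))]
  refine Finset.sum_congr rfl fun k hk => ?_
  rw [Finset.mem_Icc] at hk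
  have hfilter : Finset.univ.filter (fun σ : Fin r → Perm (Fin n) => g σ = k)
      = Finset.univ.filter (fun σ : Fin r → Perm (Fin n) =>
        (∀ i : Fin r, ∀ x : Fin n, (x:ℕ) < k → ((σ i x : Fin n):ℕ) < k) ∧
        ¬ ∃ j : ℕ, 1 ≤ j ∧ j < k ∧ ∀ i : Fin r, ∀ x : Fin n,
            (x:ℕ) < j → ((σ i x : Fin n):ℕ) < j) := by
    refine Finset.filter_congr fun σ _ => ?_
    rw [hgdef]
    simp only [Nat.find_eq_iff (hex σ)]
    constructor
    · rintro ⟨⟨-, hinv⟩, hmin⟩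
      refine ⟨hinv, ?_⟩
      rintro ⟨j, hj1, hjk, hjinv⟩
      exact hmin j hjk ⟨hj1, hjinv⟩
    · rintro ⟨hinv, hconn⟩
      refine ⟨⟨hk.1, hinv⟩, fun j hjk => ?_⟩
      rintro ⟨hj1, hjinv⟩
      exact hconn ⟨j, hj1, hjk, hjinv⟩
  rw [hfilter]
  obtain ⟨l, rfl⟩ := Nat.exists_eq_add_of_le hk.2
  rw [Nat.add_sub_cancel_left]
  exact sliceSum r k l
end
end Aux

/-- With `a_n = Σ_{σ ∈ P_n} q^{l(σ)}` the sum over connected elements of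
`G_n = S_n^{m-1}` (with `l(σ) = Σ_i l(σ_i)`), one has
`(Σ_{n≥0} ([n]_q^!)^{m-1} t^n)⁻¹ = 1 - Σ_{n≥1} a_n t^n` in `ℚ[q][[t]]`
(stated as: the product of the two series is `1`). -/
theorem inverse_of_qfactorial_series (m : ℕ) (hm : 1 ≤ m)
    (a : ℕ → Polynomial ℤ)
    (ha : ∀ n : ℕ, a n =
      ∑ σ ∈ Finset.univ.filter
          (fun σ : Fin (m - 1) → Equiv.Perm (Fin n) => PermTupleConnected σ),
        Polynomial.X ^ (∑ i : Fin (m - 1), invCount (σ i))) :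
    (PowerSeries.mk fun n => (qFact n) ^ (m - 1)) *
      (1 - PowerSeries.mk fun n => if n = 0 then 0 else a n) = 1 := by
  classical
  refine PowerSeries.ext fun n => ?_
  rw [PowerSeries.coeff_mul]
  simp only [map_sub, PowerSeries.coeff_one, PowerSeries.coeff_mk]
  rcases Nat.eq_zero_or_pos n with rfl | hn
  · rw [Finset.Nat.sum_antidiagonal_eq_sum_range_succ_mk]
    simp [qFact]
  · rw [Finset.Nat.sum_antidiagonal_eq_sum_range_succ_mk, Finset.sum_range_succ]
    have hsum : ∀ k ∈ Finset.range n, qFact k ^ (m-1) *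
        ((if n - k = 0 then (1:Polynomial ℤ) else 0) - if n - k = 0 then 0 else a (n-k))
        = -(qFact k ^ (m-1) * a (n-k)) := by
      intro k hk
      rw [Finset.mem_range] at hk
      rw [if_neg (by omega), if_neg (by omega)]
      ring
    have hlast : qFact n ^ (m-1) *
        ((if n - n = 0 then (1:Polynomial ℤ) else 0) - if n - n = 0 then 0 else a (n-n))
        = qFact n ^ (m-1) := by
      rw [Nat.sub_self, if_pos rfl, if_pos rfl]
      ring
    have hre : ∑ k ∈ Finset.Icc 1 n,
        (∑ τ ∈ Finset.univ.filter
            (fun τ : Fin (m-1) → Equiv.Perm (Fin k) => PermTupleConnected τ),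
          (Polynomial.X : Polynomial ℤ) ^ (∑ i : Fin (m-1), invCount (τ i)))
          * (qFact (n - k)) ^ (m-1)
        = ∑ k ∈ Finset.range n, qFact k ^ (m-1) * a (n-k) := by
      refine Finset.sum_nbij' (i := fun k => n - k) (j := fun k => n - k)
        ?_ ?_ ?_ ?_ ?_
      · intro k hk
        simp only [Finset.mem_Icc, Finset.mem_range] at hk ⊢
        omega
      · intro k hk
        simp only [Finset.mem_Icc, Finset.mem_range] at hk ⊢
        omega
      · intro k hk
        simp only [Finset.mem_Icc] at hk
        omega
      · intro k hk
        simp only [Finset.mem_range] at hk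
        omega
      · intro k hk
        simp only [Finset.mem_Icc] at hk
        have h1 : n - (n - k) = k := by omega
        rw [h1, ha k, mul_comm]
    have hk2 := key (m-1) n hn
    rw [hre] at hk2
    rw [Finset.sum_congr rfl hsum, hlast, Finset.sum_neg_distrib, ← hk2,
      if_neg (by omega : ¬ n = 0)]
    ring
end

section
/- For every n ≥ 1, the polynomial n·Φ_n(q), where Φ_n(q) = (1/n)·Σ_{d|n} μ(n/d)·(q^d - 1), has nonnegative integer coefficients when expanded as a polynomial in s = q - 1. -/
open Finset Polynomial

lemma card_range_filter_dvd {n e : ℕ} (hn : n ≠ 0) (he : e ∣ n) :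
    ((range n).filter (fun x => e ∣ x)).card = n / e := by
  have he0 : e ≠ 0 := by rintro rfl; exact hn (Nat.zero_dvd.mp he)
  have himg : (range n).filter (fun x => e ∣ x) = (range (n / e)).image (· * e) := by
    ext x
    simp only [mem_filter, mem_range, mem_image]
    constructor
    · rintro ⟨hx, c, rfl⟩
      refine ⟨c, ?_, mul_comm c e⟩
      have : c * e < (n / e) * e := by rwa [Nat.div_mul_cancel he, mul_comm]
      exact Nat.lt_of_mul_lt_mul_right this
    · rintro ⟨j, hj, rfl⟩
      constructor
      · calc j * e < (n / e) * e := (Nat.mul_lt_mul_right (Nat.pos_of_ne_zero he0)).mpr hj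
          _ = n := Nat.div_mul_cancel he
      · exact dvd_mul_left e j
  rw [himg, card_image_of_injective _ (fun a b h => Nat.eq_of_mul_eq_mul_right (Nat.pos_of_ne_zero he0) h), card_range]

lemma choose_eq_sum_ite {n e k : ℕ} (hn : n ≠ 0) (he : e ∣ n) :
    (((n / e).choose k : ℤ)) =
      ∑ S ∈ (range n).powersetCard k, (if ∀ x ∈ S, e ∣ x then (1:ℤ) else 0) := by
  rw [Finset.sum_boole]
  have : ((range n).powersetCard k).filter (fun S => ∀ x ∈ S, e ∣ x)
      = ((range n).filter (fun x => e ∣ x)).powersetCard k := by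
    ext S
    simp only [mem_filter, mem_powersetCard, Finset.subset_iff, mem_range]
    exact ⟨fun ⟨⟨h1, h2⟩, h3⟩ => ⟨fun x hx => ⟨h1 hx, h3 x hx⟩, h2⟩,
      fun ⟨h1, h2⟩ => ⟨⟨fun x hx => (h1 hx).1, h2⟩, fun x hx => (h1 hx).2⟩⟩
  rw [this, card_powersetCard, card_range_filter_dvd hn he]

lemma key_sum (n k : ℕ) (hn : n ≠ 0) :
    ∑ d ∈ n.divisors, (ArithmeticFunction.moebius (n / d) : ℤ) * (d.choose k : ℤ)
      = ((((range n).powersetCard k).filter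
          (fun S => Nat.gcd (S.gcd id) n = 1)).card : ℤ) := by
  have h1 : ∑ d ∈ n.divisors, (ArithmeticFunction.moebius (n / d) : ℤ) * (d.choose k : ℤ)
      = ∑ e ∈ n.divisors, (ArithmeticFunction.moebius e : ℤ) * ((n / e).choose k : ℤ) := by
    rw [← Nat.sum_div_divisors n (fun e => (ArithmeticFunction.moebius e : ℤ) * ((n / e).choose k : ℤ))]
    refine Finset.sum_congr rfl fun d hd => ?_
    rw [Nat.div_div_self (Nat.mem_divisors.mp hd).1 hn]
  rw [h1]
  have h2 : ∀ e ∈ n.divisors, (ArithmeticFunction.moebius e : ℤ) * ((n / e).choose k : ℤ)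
      = ∑ S ∈ (range n).powersetCard k,
          (ArithmeticFunction.moebius e : ℤ) * (if ∀ x ∈ S, e ∣ x then 1 else 0) := by
    intro e he
    rw [← Finset.mul_sum, ← choose_eq_sum_ite hn (Nat.mem_divisors.mp he).1]
  rw [Finset.sum_congr rfl h2, Finset.sum_comm]
  have h3 : ∀ S ∈ (range n).powersetCard k,
      ∑ e ∈ n.divisors, (ArithmeticFunction.moebius e : ℤ) * (if ∀ x ∈ S, e ∣ x then 1 else 0)
        = (if Nat.gcd (S.gcd id) n = 1 then 1 else 0) := by
    intro S _
    set m := Nat.gcd (S.gcd id) n with hm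
    have hmn : m ∣ n := Nat.gcd_dvd_right _ _
    have step : ∀ e ∈ n.divisors,
        (ArithmeticFunction.moebius e : ℤ) * (if ∀ x ∈ S, e ∣ x then 1 else 0)
          = (if e ∣ m then (ArithmeticFunction.moebius e : ℤ) else 0) := by
      intro e he
      have hen : e ∣ n := (Nat.mem_divisors.mp he).1
      have : (∀ x ∈ S, e ∣ x) ↔ e ∣ m := by
        rw [hm, Nat.dvd_gcd_iff, Finset.dvd_gcd_iff]
        simp [hen]
      simp only [this]
      split <;> simp
    rw [Finset.sum_congr rfl step, ← Finset.sum_filter,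
      Nat.divisors_filter_dvd_of_dvd hn hmn]
    have := ArithmeticFunction.moebius_mul_coe_zeta
    have h4 : ∑ e ∈ m.divisors, (ArithmeticFunction.moebius e : ℤ)
        = ((ArithmeticFunction.moebius * ArithmeticFunction.zeta) : ArithmeticFunction ℤ) m := by
      rw [ArithmeticFunction.coe_mul_zeta_apply]
    rw [h4, this, ArithmeticFunction.one_apply]
  rw [Finset.sum_congr rfl h3, Finset.sum_boole]

/-- For `n ≥ 1`, the polynomial `n·Φ_n(q) = Σ_{d|n} μ(n/d)·(q^d − 1)`, rewritten in the
variable `s = q − 1` (i.e. substituting `q = s + 1`), has nonnegative integer coefficients. -/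
theorem n_mul_Phi_nonneg_in_s (n : ℕ) (hn : 1 ≤ n) (k : ℕ) :
    ∃ c : ℕ,
      ((∑ d ∈ n.divisors, (ArithmeticFunction.moebius (n / d) : ℚ) •
          ((Polynomial.X : Polynomial ℚ) ^ d - 1)).comp (Polynomial.X + 1)).coeff k
        = (c : ℚ) := by
  have hn0 : n ≠ 0 := by omega
  have hcomp : ((∑ d ∈ n.divisors, (ArithmeticFunction.moebius (n / d) : ℚ) •
          ((Polynomial.X : Polynomial ℚ) ^ d - 1)).comp (Polynomial.X + 1))
      = ∑ d ∈ n.divisors, (ArithmeticFunction.moebius (n / d) : ℚ) •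
          (((Polynomial.X : Polynomial ℚ) + 1) ^ d - 1) := by
    simp [Polynomial.smul_comp, Polynomial.sub_comp, Polynomial.pow_comp]
  rw [hcomp, Polynomial.finset_sum_coeff]
  simp only [Polynomial.coeff_smul, Polynomial.coeff_sub, Polynomial.coeff_X_add_one_pow,
    Polynomial.coeff_one, smul_eq_mul]
  rcases Nat.eq_zero_or_pos k with hk | hk
  · exact ⟨0, by simp [hk]⟩
  have hk1 : (if k = 0 then (1:ℚ) else 0) = 0 := by simp [hk.ne']
  simp only [hk1, sub_zero]
  refine ⟨(((range n).powersetCard k).filter (fun S => Nat.gcd (S.gcd id) n = 1)).card, ?_⟩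
  have hZ := key_sum n k hn0
  calc ∑ d ∈ n.divisors, (ArithmeticFunction.moebius (n / d) : ℚ) * (d.choose k : ℚ)
      = ((∑ d ∈ n.divisors, (ArithmeticFunction.moebius (n / d) : ℤ) * (d.choose k : ℤ) : ℤ) : ℚ) := by
        push_cast; rfl
    _ = _ := by rw [hZ]; push_cast; rfl
end

section
/- For n ≥ 2 and k ≥ 0, the coefficient of s^k in Σ_{d|n} μ(d)·(s+1)^{n/d} equals the number of tuples 1 ≤ a_1 < a_2 < ... < a_k ≤ n with gcd(a_1, ..., a_k, n) = 1. -/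
open Finset Polynomial

private lemma sum_moebius_divisors_q (m : ℕ) :
    ∑ d ∈ m.divisors, (ArithmeticFunction.moebius d : ℚ) = if m = 1 then 1 else 0 := by
  have h := congrArg (fun f : ArithmeticFunction ℚ => f m)
    (ArithmeticFunction.coe_moebius_mul_coe_zeta (R := ℚ))
  simp only [ArithmeticFunction.coe_mul_zeta_apply, ArithmeticFunction.intCoe_apply,
    ArithmeticFunction.one_apply] at h
  exact h

/-- For `n ≥ 2` and `k ≥ 0`, the coefficient of `s^k` in `Σ_{d|n} μ(d)·(s+1)^{n/d}`
equals the number of tuples `1 ≤ a₁ < ⋯ < a_k ≤ n` with `gcd(a₁, …, a_k, n) = 1`. -/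
theorem coeff_moebius_sum_eq_card_coprime_tuples (n : ℕ) (hn : 2 ≤ n) (k : ℕ) :
    (∑ d ∈ n.divisors, (ArithmeticFunction.moebius d : ℚ) •
        ((Polynomial.X : Polynomial ℚ) + 1) ^ (n / d)).coeff k
      = ((((Finset.Icc 1 n).powersetCard k).filter
            (fun A => (insert n A).gcd id = 1)).card : ℚ) := by
  classical
  have hn0 : n ≠ 0 := by omega
  rw [Polynomial.finset_sum_coeff]
  simp_rw [Polynomial.coeff_smul, Polynomial.coeff_X_add_one_pow, smul_eq_mul]
  rw [Finset.card_filter]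
  push_cast
  have key : ∀ A ∈ (Icc 1 n).powersetCard k,
      (if (insert n A).gcd id = 1 then (1:ℚ) else 0)
        = ∑ d ∈ n.divisors,
            if d ∣ (insert n A).gcd id then (ArithmeticFunction.moebius d : ℚ) else 0 := by
    intro A hA
    have hg : (insert n A).gcd id ∣ n := Finset.gcd_dvd (mem_insert_self n A)
    rw [← Finset.sum_filter, Nat.divisors_filter_dvd_of_dvd hn0 hg,
      sum_moebius_divisors_q]
  rw [Finset.sum_congr rfl key, Finset.sum_comm]
  refine Finset.sum_congr rfl fun d hd => ?_
  have hdn : d ∣ n := (Nat.mem_divisors.mp hd).1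
  rw [← Finset.sum_filter, Finset.sum_const, nsmul_eq_mul]
  have hset : ((Icc 1 n).powersetCard k).filter
      (fun A => d ∣ (insert n A).gcd id)
      = ((Icc 1 n).filter (fun a => d ∣ a)).powersetCard k := by
    ext A
    simp only [Finset.mem_filter, Finset.mem_powersetCard, Finset.dvd_gcd_iff,
      Finset.mem_insert, Finset.subset_iff, id]
    constructor
    · rintro ⟨⟨hsub, hcard⟩, hdvd⟩
      exact ⟨fun {a} ha => ⟨hsub ha, hdvd a (Or.inr ha)⟩, hcard⟩
    · rintro ⟨hsub, hcard⟩
      exact ⟨⟨fun {a} ha => (hsub ha).1, hcard⟩,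
        fun a ha => ha.elim (fun h => h ▸ hdn) fun h => (hsub h).2⟩
  rw [hset, Finset.card_powersetCard]
  have hcard : ((Icc 1 n).filter (fun a => d ∣ a)).card = n / d := by
    have : Icc 1 n = Ioc 0 n := rfl
    rw [this]
    simpa using Nat.Ioc_filter_dvd_card_eq_div n d
  rw [hcard, mul_comm]
end

section
/- For a finitely generated group G, with R_n = Hom(G, S_n) acted on by S_n via conjugation and I_n the set of isomorphism classes of transitive G-actions on n points, one has Σ_{n≥0} (|R_n|/n!)·t^n = exp(Σ_{n≥1} Σ_{M ∈ I_n} t^n/|Aut(M)|) in ℚ[[t]]. -/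
/-!
Write `r n = |Hom(G, S_n)|` and `t n` for the number of transitive actions of `G` on `n` points.
An action on `{0, …, n}` amounts to the orbit `A ∋ 0`, a transitive action on `A` and an arbitrary
action on the complement, so `r (n + 1) = Σ_k C(n, k) t (k + 1) r (n - k)`. On exponential
generating functions this recursion reads `R' = T' R`, and `exp T` is the unique solution of that
equation with constant term `1`. Finally, the transitive actions on `n` points fall into
conjugation orbits, one for each class in `I_n`, and by orbit–stabilizer the orbit of `φ` has
`n! / |C(φ)|` elements, `C(φ)` being the centralizer of the image of `φ`, i.e. `Aut(M)`.
-/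

open PowerSeries

/-- The exponential of a power series `F` with zero constant term:
`exp F = Σ_{k≥0} F^k / k!`, defined coefficient-wise
(the sum is finite in each degree since `F` has positive order). -/
noncomputable def expSeries' (F : PowerSeries ℚ) : PowerSeries ℚ :=
  PowerSeries.mk fun n =>
    ∑ k ∈ Finset.range (n + 1), (1 / (k.factorial : ℚ)) * PowerSeries.coeff n (F ^ k)

namespace PowerSeries

theorem coeff_pow_eq_zero_of_lt {R : Type*} [CommSemiring R] {F : R⟦X⟧}
    (hF : constantCoeff F = 0) {n k : ℕ} (h : n < k) : coeff n (F ^ k) = 0 :=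
  coeff_of_lt_order _ <|
    lt_of_lt_of_le (by exact_mod_cast h) (le_order_pow_of_constantCoeff_eq_zero k hF)

theorem expSeries'_eq_subst_exp {F : ℚ⟦X⟧} (hF : constantCoeff F = 0) :
    expSeries' F = (exp ℚ).subst F := by
  ext n
  rw [expSeries', coeff_mk, coeff_subst' (HasSubst.of_constantCoeff_zero' hF),
    finsum_eq_sum_of_support_subset _ (s := Finset.range (n + 1)) ?_]
  · simp [coeff_exp]
  · intro k hk
    contrapose! hk
    simp [coeff_pow_eq_zero_of_lt hF (by simpa using hk)]

theorem derivative_expSeries' {F : ℚ⟦X⟧} (hF : constantCoeff F = 0) :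
    d⁄dX ℚ (expSeries' F) = d⁄dX ℚ F * expSeries' F := by
  rw [expSeries'_eq_subst_exp hF, derivative_subst (HasSubst.of_constantCoeff_zero' hF),
    derivative_exp, mul_comm]

theorem eq_of_derivative_eq_mul {R : Type*} [CommRing R] [IsDomain R] [CharZero R]
    {D E₁ E₂ : R⟦X⟧} (h₁ : d⁄dX R E₁ = D * E₁) (h₂ : d⁄dX R E₂ = D * E₂)
    (h₀ : constantCoeff E₁ = constantCoeff E₂) : E₁ = E₂ := by
  ext n
  induction n using Nat.strong_induction_on with
  | _ n ih =>
    cases n with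
    | zero => simpa using h₀
    | succ n =>
      have hder : coeff n (d⁄dX R E₁) = coeff n (d⁄dX R E₂) := by
        rw [h₁, h₂, coeff_mul, coeff_mul]
        refine Finset.sum_congr rfl fun p hp => ?_
        rw [ih p.2 (Finset.Nat.antidiagonal.snd_lt hp)]
      rw [coeff_derivative, coeff_derivative] at hder
      exact mul_right_cancel₀ (by norm_cast) hder

noncomputable def egf (a : ℕ → ℚ) : ℚ⟦X⟧ := mk fun n => a n / n.factorial

theorem derivative_egf (a : ℕ → ℚ) : d⁄dX ℚ (egf a) = egf fun n => a (n + 1) := by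
  ext n
  rw [coeff_derivative, egf, egf, coeff_mk, coeff_mk, Nat.factorial_succ]
  push_cast
  field_simp

theorem egf_mul (a b : ℕ → ℚ) :
    egf a * egf b =
      egf fun n => ∑ k ∈ Finset.range (n + 1), n.choose k * a k * b (n - k) := by
  ext n
  rw [coeff_mul, Finset.Nat.sum_antidiagonal_eq_sum_range_succ_mk, egf, egf, egf, coeff_mk,
    Finset.sum_div]
  refine Finset.sum_congr rfl fun k hk => ?_
  rw [coeff_mk, coeff_mk, Nat.cast_choose ℚ (Nat.lt_succ_iff.mp (Finset.mem_range.mp hk))]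
  field_simp

theorem egf_eq_expSeries'_of_recursion {a b : ℕ → ℚ} (ha : a 0 = 1) (hb : b 0 = 0)
    (hrec : ∀ n, a (n + 1) =
      ∑ k ∈ Finset.range (n + 1), n.choose k * b (k + 1) * a (n - k)) :
    egf a = expSeries' (egf b) := by
  have hb₀ : constantCoeff (egf b) = 0 := by
    rw [← coeff_zero_eq_constantCoeff_apply, egf, coeff_mk, hb, zero_div]
  refine eq_of_derivative_eq_mul (D := d⁄dX ℚ (egf b)) ?_ (derivative_expSeries' hb₀) ?_
  · rw [derivative_egf, derivative_egf, egf_mul]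
    exact congrArg egf (funext hrec)
  · rw [← coeff_zero_eq_constantCoeff_apply, ← coeff_zero_eq_constantCoeff_apply]
    simp [egf, expSeries', ha]

end PowerSeries

theorem MulAction.card_subtype_eq_sum_card_orbit {H X : Type*} [Group H] [MulAction H X]
    [Finite X] (P : X → Prop) (hP : ∀ (h : H) x, P x → P (h • x)) (T : Finset X)
    (hT : ∀ t ∈ T, P t) (htransversal : ∀ x, P x → ∃! t, t ∈ T ∧ ∃ h : H, h • x = t) :
    Nat.card {x // P x} = ∑ t ∈ T, Nat.card (orbit H t) := by
  classical
  have : Fintype X := Fintype.ofFinite X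
  have hunion :
      Finset.univ.filter P = T.biUnion fun t => Finset.univ.filter (· ∈ orbit H t) := by
    ext x
    simp only [Finset.mem_filter, Finset.mem_univ, true_and, Finset.mem_biUnion]
    constructor
    · intro hx
      obtain ⟨t, ⟨htT, h, rfl⟩, -⟩ := htransversal x hx
      exact ⟨_, htT, h⁻¹, inv_smul_smul h x⟩
    · rintro ⟨t, htT, h, rfl⟩
      exact hP h t (hT t htT)
  have hdisj : (T : Set X).PairwiseDisjoint fun t => Finset.univ.filter (· ∈ orbit H t) := by
    intro t₁ ht₁ t₂ ht₂ hne
    refine Finset.disjoint_left.mpr fun x hx₁ hx₂ => hne ?_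
    simp only [Finset.mem_filter, Finset.mem_univ, true_and] at hx₁ hx₂
    obtain ⟨h₁, rfl⟩ := hx₁
    obtain ⟨h₂, hx⟩ := hx₂
    obtain ⟨t, -, huniq⟩ := htransversal _ (hP h₁ t₁ (hT t₁ ht₁))
    simp only at hx
    rw [huniq t₁ ⟨ht₁, h₁⁻¹, inv_smul_smul h₁ t₁⟩,
      huniq t₂ ⟨ht₂, h₂⁻¹, by rw [← hx, inv_smul_smul]⟩]
  rw [Nat.card_eq_fintype_card, Fintype.card_subtype, hunion, Finset.card_biUnion hdisj]
  refine Finset.sum_congr rfl fun t _ => ?_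
  rw [← Fintype.card_subtype, ← Nat.card_eq_fintype_card]

namespace MonoidHom

open Equiv Finset

variable {G : Type*} [Group G]

instance finite_of_fg [Group.FG G] {H : Type*} [Group H] [Finite H] : Finite (G →* H) := by
  obtain ⟨S, hS, hfin⟩ := Group.fg_iff.mp ‹Group.FG G›
  have := hfin.to_subtype
  refine Finite.of_injective (fun (φ : G →* H) (s : S) => φ s) fun φ ψ h => ?_
  exact eq_of_eqOn_dense hS fun x hx => congrFun h ⟨x, hx⟩

section Conjugation

variable {H : Type*} [Group H]

instance conjMulAction : MulAction H (G →* H) where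
  smul h φ := (MulAut.conj h).toMonoidHom.comp φ
  one_smul φ := by ext; simp [HSMul.hSMul]
  mul_smul h₁ h₂ φ := by ext; simp [HSMul.hSMul, mul_assoc]

theorem conj_smul_apply (h : H) (φ : G →* H) (g : G) : (h • φ) g = h * φ g * h⁻¹ := rfl

theorem stabilizer_eq_centralizer_range (φ : G →* H) :
    MulAction.stabilizer H φ = Subgroup.centralizer (Set.range φ) := by
  ext h
  simp only [MulAction.mem_stabilizer_iff, Subgroup.mem_centralizer_iff, Set.forall_mem_range,
    MonoidHom.ext_iff, conj_smul_apply]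
  exact forall_congr' fun g => by rw [mul_inv_eq_iff_eq_mul, eq_comm]

theorem card_orbit_conj [Finite H] (φ : G →* H) :
    (Nat.card (MulAction.orbit H φ) : ℚ) =
      Nat.card H / Nat.card (Subgroup.centralizer (Set.range φ)) := by
  have h := (MulAction.stabilizer H φ).card_mul_index
  rw [MulAction.index_stabilizer, ← Nat.card_coe_set_eq, stabilizer_eq_centralizer_range] at h
  rw [← h, Nat.cast_mul, mul_div_cancel_left₀ _ (Nat.cast_ne_zero.mpr Nat.card_pos.ne')]

end Conjugation

section Transitive

variable {α β : Type*}

def IsTransitive (ψ : G →* Perm α) : Prop := ∀ x y : α, ∃ g, ψ g x = y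

theorem IsTransitive.conj_smul {ψ : G →* Perm α} (hψ : ψ.IsTransitive) (σ : Perm α) :
    (σ • ψ).IsTransitive := fun x y => by
  obtain ⟨g, hg⟩ := hψ (σ⁻¹ x) (σ⁻¹ y)
  exact ⟨g, by
    rw [conj_smul_apply, Perm.mul_apply, Perm.mul_apply, hg, Perm.inv_def, apply_symm_apply]⟩

theorem isTransitive_permCongr_iff (e : α ≃ β) (ψ : G →* Perm α) :
    IsTransitive (e.permCongrHom.monoidHomCongrRightEquiv ψ) ↔ IsTransitive ψ := by
  refine ⟨fun h x y => ?_, fun h x y => ?_⟩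
  · obtain ⟨g, hg⟩ := h (e x) (e y)
    exact ⟨g, by simpa [Equiv.permCongrHom_coe, Equiv.permCongr_apply] using hg⟩
  · obtain ⟨g, hg⟩ := h (e.symm x) (e.symm y)
    exact ⟨g, by simp [Equiv.permCongrHom_coe, Equiv.permCongr_apply, hg]⟩

theorem card_perm_congr (e : α ≃ β) : Nat.card (G →* Perm α) = Nat.card (G →* Perm β) :=
  Nat.card_congr e.permCongrHom.monoidHomCongrRightEquiv

theorem card_isTransitive_congr (e : α ≃ β) :
    Nat.card {ψ : G →* Perm α // IsTransitive ψ} = Nat.card {ψ : G →* Perm β // IsTransitive ψ} :=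
  Nat.card_congr <| e.permCongrHom.monoidHomCongrRightEquiv.subtypeEquiv fun ψ =>
    (isTransitive_permCongr_iff e ψ).symm

variable (G) in
noncomputable def transitiveCount (n : ℕ) : ℕ :=
  Nat.card {ψ : G →* Perm (Fin n) // IsTransitive ψ}

theorem sum_inv_card_centralizer_eq_transitiveCount_div [Group.FG G] {n : ℕ}
    (T : Finset (G →* Perm (Fin n)))
    (htrans : ∀ φ ∈ T, φ.IsTransitive)
    (hrep : ∀ ψ : G →* Perm (Fin n), ψ.IsTransitive →
      ∃! φ, φ ∈ T ∧ ∃ σ : Perm (Fin n), ∀ g, σ * ψ g * σ⁻¹ = φ g) :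
    ∑ φ ∈ T, (1 : ℚ) / Nat.card (Subgroup.centralizer (Set.range φ)) =
      transitiveCount G n / n.factorial := by
  rw [transitiveCount, MulAction.card_subtype_eq_sum_card_orbit _ (fun σ _ hψ => hψ.conj_smul σ) T
    htrans (by simpa only [MonoidHom.ext_iff, conj_smul_apply] using hrep), Nat.cast_sum, sum_div]
  refine sum_congr rfl fun φ _ => ?_
  rw [card_orbit_conj, Nat.card_perm, Nat.card_fin]
  field_simp

end Transitive

section OrbitDecomposition

variable {α : Type*}

def subtypePerm (ψ : G →* Perm α) (p : α → Prop) (h : ∀ g x, p (ψ g x) ↔ p x) :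
    G →* Perm {x // p x} where
  toFun g := (ψ g).subtypePerm (h g)
  map_one' := by ext; simp
  map_mul' _ _ := by ext; simp only [map_mul]; rfl

@[simp]
theorem subtypePerm_apply (ψ : G →* Perm α) (p : α → Prop) (h : ∀ g x, p (ψ g x) ↔ p x) (g : G)
    (x : {x // p x}) : (ψ.subtypePerm p h g x : α) = ψ g x := rfl

def invariantEquivProd (p : α → Prop) [DecidablePred p] :
    {ψ : G →* Perm α // ∀ g x, p (ψ g x) ↔ p x} ≃
      (G →* Perm {x // p x}) × (G →* Perm {x // ¬p x}) where
  toFun ψ := (ψ.1.subtypePerm p ψ.2, ψ.1.subtypePerm (¬p ·) fun g x => not_congr (ψ.2 g x))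
  invFun φ := ⟨(Perm.subtypeCongrHom p).comp (φ.1.prod φ.2), fun g x => by
    by_cases hx : p x
    · simpa [Perm.subtypeCongr.left_apply _ _ hx, hx] using (φ.1 g ⟨x, hx⟩).2
    · simpa [Perm.subtypeCongr.right_apply _ _ hx, hx] using (φ.2 g ⟨x, hx⟩).2⟩
  left_inv ψ := by
    ext g x
    by_cases hx : p x
    · simp [Perm.subtypeCongr.left_apply _ _ hx]
    · simp [Perm.subtypeCongr.right_apply _ _ hx]
  right_inv φ := by
    ext g x
    · simp [Perm.subtypeCongr.left_apply _ _ x.2]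
    · simp [Perm.subtypeCongr.right_apply _ _ x.2]

noncomputable def orbitFinset [Finite α] (ψ : G →* Perm α) (a : α) : Finset α :=
  (Set.toFinite (Set.range fun g => ψ g a)).toFinset

theorem mem_orbitFinset [Finite α] {ψ : G →* Perm α} {a x : α} :
    x ∈ ψ.orbitFinset a ↔ ∃ g, ψ g a = x := by
  simp [orbitFinset]

theorem self_mem_orbitFinset [Finite α] (ψ : G →* Perm α) (a : α) : a ∈ ψ.orbitFinset a :=
  mem_orbitFinset.mpr ⟨1, by simp⟩

theorem orbitFinset_eq_iff [Finite α] {ψ : G →* Perm α} {a : α} {A : Finset α} (ha : a ∈ A) :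
    ψ.orbitFinset a = A ↔
      ∃ h : ∀ g x, ψ g x ∈ A ↔ x ∈ A, IsTransitive (ψ.subtypePerm (· ∈ A) h) := by
  constructor
  · rintro rfl
    have hinv : ∀ g x, ψ g x ∈ ψ.orbitFinset a ↔ x ∈ ψ.orbitFinset a := fun g x => by
      simp only [mem_orbitFinset]
      refine ⟨fun ⟨k, hk⟩ => ⟨g⁻¹ * k, ?_⟩, fun ⟨k, hk⟩ => ⟨g * k, ?_⟩⟩
      · rw [map_mul, Perm.mul_apply, hk, map_inv, Perm.inv_eq_iff_eq]
      · rw [map_mul, Perm.mul_apply, hk]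
    refine ⟨hinv, fun ⟨x, hx⟩ ⟨y, hy⟩ => ?_⟩
    obtain ⟨k, rfl⟩ := mem_orbitFinset.mp hx
    obtain ⟨l, rfl⟩ := mem_orbitFinset.mp hy
    exact ⟨l * k⁻¹, Subtype.ext <| by
      rw [subtypePerm_apply, map_mul, Perm.mul_apply, map_inv, Perm.inv_eq_iff_eq.mpr rfl]⟩
  · rintro ⟨hinv, htrans⟩
    ext x
    rw [mem_orbitFinset]
    refine ⟨fun ⟨g, hg⟩ => hg ▸ (hinv g a).mpr ha, fun hx => ?_⟩
    obtain ⟨g, hg⟩ := htrans ⟨a, ha⟩ ⟨x, hx⟩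
    exact ⟨g, congrArg Subtype.val hg⟩

def orbitFinsetEqEquiv [Fintype α] [DecidableEq α] {a : α} {A : Finset α} (ha : a ∈ A) :
    {ψ : G →* Perm α // ψ.orbitFinset a = A} ≃
      {φ : G →* Perm A // IsTransitive φ} × (G →* Perm {x // x ∉ A}) :=
  (Equiv.subtypeEquivRight fun _ => orbitFinset_eq_iff ha).trans <|
    (Equiv.subtypeSubtypeEquivSubtypeExists _ _).symm.trans <|
      ((invariantEquivProd (· ∈ A)).subtypeEquiv fun _ => Iff.rfl).trans
        Equiv.prodSubtypeFstEquivSubtypeProd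

theorem card_fiber_orbitFinset [Fintype α] [DecidableEq α] {a : α} {A : Finset α} (ha : a ∈ A) :
    Nat.card {ψ : G →* Perm α // ψ.orbitFinset a = A} =
      transitiveCount G #A * Nat.card (G →* Perm (Fin (Fintype.card α - #A))) := by
  rw [Nat.card_congr (orbitFinsetEqEquiv ha), Nat.card_prod, transitiveCount,
    card_isTransitive_congr (A.equivFin), card_perm_congr (Fintype.equivFinOfCardEq _)]
  simp [Fintype.card_subtype_compl]

theorem card_perm_eq_sum_orbitFinset [Group.FG G] [Fintype α] [DecidableEq α] (a : α) :
    Nat.card (G →* Perm α) =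
      ∑ B ∈ (univ.erase a).powerset,
        Nat.card {ψ : G →* Perm α // ψ.orbitFinset a = insert a B} := by
  have := Fintype.ofFinite (G →* Perm α)
  rw [Nat.card_eq_fintype_card, ← Finset.card_univ,
    card_eq_sum_card_fiberwise (f := fun ψ => (ψ.orbitFinset a).erase a)
      fun ψ _ => mem_powerset.mpr (erase_subset_erase a (subset_univ _))]
  refine sum_congr rfl fun B hB => ?_
  have haB : a ∉ B := fun h => by simpa using mem_powerset.mp hB h
  rw [Nat.card_eq_fintype_card, Fintype.card_subtype]
  congr 1
  ext ψ
  simp only [mem_filter, mem_univ, true_and]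
  constructor
  · rintro rfl
    exact (insert_erase (self_mem_orbitFinset ψ a)).symm
  · intro h
    rw [h, erase_insert haB]

theorem card_perm_fin_zero : Nat.card (G →* Perm (Fin 0)) = 1 :=
  have : Subsingleton (G →* Perm (Fin 0)) :=
    ⟨fun _ _ => MonoidHom.ext fun _ => Subsingleton.elim _ _⟩
  Nat.card_of_subsingleton 1

theorem card_perm_fin_succ [Group.FG G] (n : ℕ) :
    Nat.card (G →* Perm (Fin (n + 1))) = ∑ k ∈ Finset.range (n + 1),
      n.choose k * (transitiveCount G (k + 1) * Nat.card (G →* Perm (Fin (n - k)))) := by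
  rw [card_perm_eq_sum_orbitFinset 0]
  have hfiber : ∀ B ∈ (univ.erase (0 : Fin (n + 1))).powerset,
      Nat.card {ψ : G →* Perm (Fin (n + 1)) // ψ.orbitFinset 0 = insert 0 B} =
        transitiveCount G (#B + 1) * Nat.card (G →* Perm (Fin (n - #B))) := fun B hB => by
    have haB : 0 ∉ B := fun h => by simpa using mem_powerset.mp hB h
    rw [card_fiber_orbitFinset (mem_insert_self 0 B), card_insert_of_notMem haB, Fintype.card_fin,
      Nat.add_sub_add_right]
  rw [sum_congr rfl hfiber, sum_powerset_apply_card
      (fun k => transitiveCount G (k + 1) * Nat.card (G →* Perm (Fin (n - k)))),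
    card_erase_of_mem (mem_univ _), card_univ, Fintype.card_fin, Nat.add_sub_cancel]
  simp only [smul_eq_mul]

end OrbitDecomposition

end MonoidHom

/-- `I_n` is encoded by a transversal `T n` of the transitive homomorphisms `G →* S_n` up to
conjugation; the automorphism group of the `G`-set given by `φ` is the centralizer of the range
of `φ`. -/
theorem exponential_formula_G_sets (G : Type*) [Group G] [Group.FG G]
    (T : (n : ℕ) → Finset (G →* Equiv.Perm (Fin n)))
    (htrans : ∀ n, ∀ φ ∈ T n, ∀ x y : Fin n, ∃ g : G, φ g x = y)
    (hrep : ∀ (n : ℕ) (ψ : G →* Equiv.Perm (Fin n)), (∀ x y : Fin n, ∃ g : G, ψ g x = y) →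
      ∃! φ : G →* Equiv.Perm (Fin n), φ ∈ T n ∧
        ∃ σ : Equiv.Perm (Fin n), ∀ g : G, σ * ψ g * σ⁻¹ = φ g) :
    (PowerSeries.mk fun n => (Nat.card (G →* Equiv.Perm (Fin n)) : ℚ) / n.factorial) =
      expSeries' (PowerSeries.mk fun n => if n = 0 then (0 : ℚ) else
        ∑ φ ∈ T n, (1 : ℚ) /
          Nat.card (Subgroup.centralizer (Set.range (⇑φ)) : Subgroup (Equiv.Perm (Fin n)))) := by
  have hrec := egf_eq_expSeries'_of_recursion
    (a := fun n => (Nat.card (G →* Equiv.Perm (Fin n)) : ℚ))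
    (b := fun n => if n = 0 then 0 else (MonoidHom.transitiveCount G n : ℚ))
    (by simp [MonoidHom.card_perm_fin_zero]) (if_pos rfl)
    (fun n => by simp [MonoidHom.card_perm_fin_succ, mul_assoc])
  refine hrec.trans (congrArg expSeries' ?_)
  ext n
  rw [egf, coeff_mk, coeff_mk]
  split_ifs
  · rw [zero_div]
  · exact (MonoidHom.sum_inv_card_centralizer_eq_transitiveCount_div (T n) (htrans n) (hrep n)).symm
end
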